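/- arXiv:1612.07286 — 4 statements merged into one kernel-verified Lean document; each statement's English description precedes it below -/
import Mathlib

section
/- The generating function B(z) = (1 - sqrt(1-4z))/(2z) of binary trees (equivalently, the formal power series satisfying B(z) = 1 + z·B(z)²) satisfies the identity B(z) = 1 + (z/(1-2z))·B(z²/(1-2z)²). -/
open Complex

private lemma sq_cpow_half {x : ℂ} (hx : x ≠ 0) : (x ^ ((1:ℂ)/2)) ^ 2 = x := by
  rw [sq, ← Complex.cpow_add _ _ hx]
  norm_num

private lemma re_cpow_half_pos {x : ℂ} (hx : 0 < x.re) : 0 < (x ^ ((1:ℂ)/2)).re := by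
  have hx0 : x ≠ 0 := by
    intro h; rw [h] at hx; simp at hx
  rw [Complex.cpow_def_of_ne_zero hx0, Complex.exp_re]
  have harg : |Complex.arg x| < Real.pi / 2 :=
    Complex.abs_arg_lt_pi_div_two_iff.mpr (Or.inl hx)
  have him : (Complex.log x * ((1:ℂ)/2)).im = Complex.arg x / 2 := by
    simp [Complex.mul_im, Complex.log_im]
    ring
  rw [him]
  have hpi := Real.pi_pos
  obtain ⟨h1, h2⟩ := abs_lt.mp harg
  have hcos : 0 < Real.cos (Complex.arg x / 2) :=
    Real.cos_pos_of_mem_Ioo ⟨by linarith, by linarith⟩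
  positivity

private lemma re_div_pos {a b : ℂ} (ha : |a.im| < a.re) (hb : |b.im| < b.re) :
    0 < (a / b).re := by
  have h1 : 0 < a.re := lt_of_le_of_lt (abs_nonneg _) ha
  have h2 : 0 < b.re := lt_of_le_of_lt (abs_nonneg _) hb
  have hb0 : b ≠ 0 := fun h => by simp [h] at h2
  rw [Complex.div_re]
  have hnsq : 0 < Complex.normSq b := Complex.normSq_pos.mpr hb0
  have key : |a.im * b.im| < a.re * b.re := by
    rw [abs_mul]
    calc |a.im| * |b.im| ≤ |a.im| * b.re := by
          exact mul_le_mul_of_nonneg_left hb.le (abs_nonneg _)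
      _ < a.re * b.re := by exact mul_lt_mul_of_pos_right ha h2
  have key2 : a.re * b.re + a.im * b.im > 0 := by
    have := neg_abs_le (a.im * b.im)
    linarith
  rw [← add_div]
  positivity

private lemma eq_of_sq_eq_sq {a b : ℂ} (h : a ^ 2 = b ^ 2) (ha : 0 < a.re) (hb : 0 < b.re) :
    a = b := by
  have h0 : (a - b) * (a + b) = 0 := by linear_combination h
  rcases mul_eq_zero.mp h0 with h' | h'
  · exact sub_eq_zero.mp h'
  · exfalso
    have hab : a = -b := eq_neg_of_add_eq_zero_left h'
    have : a.re = -b.re := by rw [hab, Complex.neg_re]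
    linarith

/-- The generating function of binary trees, `B(z) = (1 - sqrt(1-4z))/(2z)`,
taken with the principal branch of the square root. -/
noncomputable def treeGF (z : ℂ) : ℂ := (1 - (1 - 4 * z) ^ ((1 : ℂ) / 2)) / (2 * z)

/-- `B(z) = 1 + (z/(1-2z)) · B(z²/(1-2z)²)`. -/
theorem treeGF_functional_identity (z : ℂ) (hz : z ≠ 0) (hz4 : ‖z‖ < 1 / 4) :
    treeGF z = 1 + (z / (1 - 2 * z)) * treeGF (z ^ 2 / (1 - 2 * z) ^ 2) := by
  have hzre : |z.re| ≤ ‖z‖ := Complex.abs_re_le_norm z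
  have hzim : |z.im| ≤ ‖z‖ := Complex.abs_im_le_norm z
  obtain ⟨hre1, hre2⟩ := abs_le.mp hzre
  obtain ⟨him1, him2⟩ := abs_le.mp hzim
  set c : ℂ := 1 - 2 * z with hc_def
  have hc_re : 1/2 < c.re := by simp [hc_def]; linarith
  have hc_im : |c.im| < 1/2 := by
    simp [hc_def, abs_lt]
    linarith
  have hc_cond : |c.im| < c.re := by linarith
  have hc0 : c ≠ 0 := fun h => by simp [h] at hc_re; linarith
  -- s
  have hx_re : 0 < (1 - 4 * z).re := by simp; linarith
  have hx0 : (1 - 4 * z) ≠ 0 := fun h => by simp [h] at hx_re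
  set s : ℂ := (1 - 4 * z) ^ ((1:ℂ)/2) with hs_def
  have hs_re : 0 < s.re := re_cpow_half_pos hx_re
  have hs_sq : s ^ 2 = 1 - 4 * z := sq_cpow_half hx0
  have hs_im : |s.im| < s.re := by
    have h2 : (s ^ 2).re = s.re ^ 2 - s.im ^ 2 := by
      rw [sq]; rw [Complex.mul_re]; ring
    have : 0 < s.re ^ 2 - s.im ^ 2 := by rw [← h2, hs_sq]; exact hx_re
    rw [abs_lt]; constructor <;> nlinarith
  -- w
  set w : ℂ := z ^ 2 / c ^ 2 with hw_def
  have hcabs : 1/2 < ‖c‖ := by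
    calc (1:ℝ)/2 < 1 - 2 * ‖z‖ := by linarith
    _ ≤ ‖c‖ := by
        have h := norm_sub_norm_le (1:ℂ) (2*z)
        simp only [norm_one, norm_mul] at h
        simpa [Complex.norm_two] using h
  have hwabs : ‖w‖ < 1/4 := by
    rw [hw_def, norm_div, norm_pow, norm_pow]
    have h1 : ‖z‖ ^ 2 < (1/4)^2 := by nlinarith [norm_nonneg z]
    have h2 : (1/2:ℝ)^2 < ‖c‖ ^ 2 := by nlinarith
    rw [div_lt_iff₀ (by positivity)]
    nlinarith
  have hy_re : 0 < (1 - 4 * w).re := by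
    have hwre : |w.re| ≤ ‖w‖ := Complex.abs_re_le_norm w
    obtain ⟨h1, h2⟩ := abs_le.mp hwre
    simp; linarith
  have hy0 : (1 - 4 * w) ≠ 0 := fun h => by simp [h] at hy_re
  set t : ℂ := (1 - 4 * w) ^ ((1:ℂ)/2) with ht_def
  have ht_re : 0 < t.re := re_cpow_half_pos hy_re
  have ht_sq : t ^ 2 = 1 - 4 * w := sq_cpow_half hy0
  have hkey : t = s / c := by
    apply eq_of_sq_eq_sq _ ht_re (re_div_pos hs_im hc_cond)
    rw [ht_sq, div_pow, hs_sq, hw_def]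
    field_simp
    ring
  have hw0 : w ≠ 0 := by
    rw [hw_def]
    exact div_ne_zero (pow_ne_zero 2 hz) (pow_ne_zero 2 hc0)
  have hc0' : (1:ℂ) - 2 * z ≠ 0 := hc_def ▸ hc0
  have hd : (z ^ 2 * 2 - z ^ 3 * 8 + z ^ 4 * 8) ≠ 0 := by
    have he : z ^ 2 * 2 - z ^ 3 * 8 + z ^ 4 * 8 = 2 * z ^ 2 * (1 - 2 * z) ^ 2 := by ring
    rw [he]
    exact mul_ne_zero (mul_ne_zero two_ne_zero (pow_ne_zero _ hz)) (pow_ne_zero _ hc0')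
  rw [treeGF, treeGF, ← hs_def, ← ht_def, hkey, hw_def, hc_def]
  field_simp
  have hD : (z ^ 2 * 2 - z ^ 3 * 8 + z ^ 4 * 8) * (z ^ 2 * 2 - z ^ 3 * 8 + z ^ 4 * 8)⁻¹ = 1 :=
    mul_inv_cancel₀ hd
  linear_combination
end

section
/- Touchard's identity: for all n ≥ 0, the Catalan numbers satisfy C_{n+1} = Σ_{0 ≤ k ≤ n/2} C_k · 2^{n-2k} · binomial(n, 2k). -/
open Polynomial Finset

/-- Coefficients of `(1 + X²)^j` over `ℕ`. -/
lemma coeff_one_add_X_sq_pow (j t : ℕ) :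
    ((1 + X ^ 2 : Polynomial ℕ) ^ j).coeff t = if 2 ∣ t then j.choose (t / 2) else 0 := by
  rw [add_comm, add_pow, finset_sum_coeff]
  simp only [one_pow, mul_one, ← pow_mul, Polynomial.coeff_mul_natCast,
    coeff_X_pow, Nat.cast_id]
  by_cases hd : 2 ∣ t
  · obtain ⟨m, rfl⟩ := hd
    rw [if_pos ⟨m, rfl⟩]
    have : ∀ k ∈ Finset.range (j + 1), (if 2 * m = 2 * k then 1 else 0) * j.choose k
        = if k = m then j.choose k else 0 := by
      intro k _; split_ifs with h1 h2 h2 <;> omega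
    rw [Finset.sum_congr rfl this, Finset.sum_ite_eq' (Finset.range (j + 1)) m]
    have : 2 * m / 2 = m := by omega
    rw [this]
    split_ifs with h
    · rfl
    · exact (Nat.choose_eq_zero_of_lt (by simp at h; omega)).symm
  · rw [if_neg hd]
    apply Finset.sum_eq_zero
    intro k _
    rw [if_neg (by rintro rfl; exact hd ⟨k, rfl⟩), zero_mul]

/-- Summing a function over the even elements of `range (n+1)`. -/
lemma sum_even_eq (n : ℕ) (f : ℕ → ℕ) :
    (∑ j ∈ Finset.range (n + 1), if 2 ∣ j then f j else 0)
      = ∑ k ∈ Finset.range (n / 2 + 1), f (2 * k) := by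
  rw [← Finset.sum_filter]
  refine Finset.sum_nbij' (fun j => j / 2) (fun k => 2 * k) ?_ ?_ ?_ ?_ ?_
  · intro a ha; simp only [Finset.mem_filter, Finset.mem_range] at ha ⊢; omega
  · intro a ha; simp only [Finset.mem_filter, Finset.mem_range] at ha ⊢
    exact ⟨by omega, ⟨a, rfl⟩⟩
  · intro a ha; simp only [Finset.mem_filter] at ha; obtain ⟨-, k, rfl⟩ := ha
    omega
  · intro a _; omega
  · intro a ha; simp only [Finset.mem_filter] at ha; obtain ⟨-, k, rfl⟩ := ha
    congr 1; omega

/-- Key binomial identity obtained by extracting the coefficient of `X^(n+2r)` in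
`(1 + X)^(2n) = ((1 + X²) + 2X)^n`. -/
lemma touchard_key (n r : ℕ) : (2 * n).choose (n + 2 * r) =
    ∑ k ∈ Finset.range (n / 2 + 1),
      (2 * k).choose (k + r) * 2 ^ (n - 2 * k) * n.choose (2 * k) := by
  have h1 : ((1 + X : Polynomial ℕ) ^ (2 * n)).coeff (n + 2 * r) = (2 * n).choose (n + 2 * r) := by
    rw [coeff_one_add_X_pow, Nat.cast_id]
  rw [← h1]
  have h2 : (1 + X : Polynomial ℕ) ^ (2 * n) = ((1 + X ^ 2) + 2 * X) ^ n := by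
    rw [pow_mul]; ring_nf
  rw [h2, add_pow, finset_sum_coeff]
  have term : ∀ j ∈ Finset.range (n + 1),
      ((1 + X ^ 2 : Polynomial ℕ) ^ j * (2 * X) ^ (n - j)
          * (n.choose j : Polynomial ℕ)).coeff (n + 2 * r)
      = if 2 ∣ j then (j.choose (j / 2 + r) * 2 ^ (n - j) * n.choose j) else 0 := by
    intro j hj
    simp only [Finset.mem_range] at hj
    have hjn : j ≤ n := by omega
    have e1 : (1 + X ^ 2 : Polynomial ℕ) ^ j * (2 * X) ^ (n - j) * (n.choose j : Polynomial ℕ)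
        = ((1 + X ^ 2) ^ j * ((n.choose j * 2 ^ (n - j) : ℕ) : Polynomial ℕ)) * X ^ (n - j) := by
      push_cast
      ring
    rw [e1, coeff_mul_X_pow', if_pos (by omega : n - j ≤ n + 2 * r),
      Polynomial.coeff_mul_natCast, Nat.cast_id,
      show n + 2 * r - (n - j) = j + 2 * r by omega,
      coeff_one_add_X_sq_pow]
    by_cases hd : 2 ∣ j
    · rw [if_pos (by omega), if_pos hd, show (j + 2 * r) / 2 = j / 2 + r by omega]
      ring
    · rw [if_neg (by omega), if_neg hd, zero_mul]
  rw [Finset.sum_congr rfl term,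
    sum_even_eq n (fun j => j.choose (j / 2 + r) * 2 ^ (n - j) * n.choose j)]
  apply Finset.sum_congr rfl
  intro k _
  rw [show 2 * k / 2 = k from by omega]

/-- Catalan numbers as a difference of binomial coefficients. -/
lemma catalan_sub (k : ℕ) : catalan k = (2 * k).choose k - (2 * k).choose (k + 1) := by
  have h1 : (k + 1) * catalan k = (2 * k).choose k := succ_mul_catalan_eq_centralBinom k
  have h2 : (2 * k).choose (k + 1) * (k + 1) = (2 * k).choose k * k := by
    rw [Nat.choose_succ_right_eq]; congr 1; omega
  have h3 : (k + 1) * (catalan k + (2 * k).choose (k + 1)) = (k + 1) * (2 * k).choose k := by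
    rw [Nat.mul_add, h1]; nlinarith [h2]
  have h4 := Nat.eq_of_mul_eq_mul_left (by omega : 0 < k + 1) h3
  omega

lemma catalan_succ_sub (n : ℕ) :
    catalan (n + 1) = (2 * n).choose n - (2 * n).choose (n + 2) := by
  rw [catalan_sub (n + 1)]
  have s1 : (2 * n + 1).choose n = (2 * n + 1).choose (n + 1) := (Nat.choose_symm_half n).symm
  have p1 : (2 * (n + 1)).choose (n + 1) = (2 * n + 1).choose n + (2 * n + 1).choose (n + 1) := by
    rw [show 2 * (n + 1) = (2 * n + 1) + 1 from by ring]
    exact Nat.choose_succ_succ' (2 * n + 1) n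
  have p2 : (2 * (n + 1)).choose (n + 2)
      = (2 * n + 1).choose (n + 1) + (2 * n + 1).choose (n + 2) := by
    rw [show 2 * (n + 1) = (2 * n + 1) + 1 from by ring]
    exact Nat.choose_succ_succ' (2 * n + 1) (n + 1)
  have q1 : (2 * n + 1).choose (n + 1) = (2 * n).choose n + (2 * n).choose (n + 1) :=
    Nat.choose_succ_succ' (2 * n) n
  have q2 : (2 * n + 1).choose (n + 2) = (2 * n).choose (n + 1) + (2 * n).choose (n + 2) :=
    Nat.choose_succ_succ' (2 * n) (n + 1)
  have le1 : (2 * n).choose (n + 2) ≤ (2 * n).choose n := by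
    have := Nat.choose_le_middle (n + 2) (2 * n)
    rwa [show 2 * n / 2 = n from by omega] at this
  have le2 : (2 * (n + 1)).choose (n + 2) ≤ (2 * (n + 1)).choose (n + 1) := by
    have := Nat.choose_le_middle (n + 2) (2 * (n + 1))
    rwa [show 2 * (n + 1) / 2 = n + 1 from by omega] at this
  have e : (2 * (n + 1)).choose (n + 1 + 1) = (2 * (n + 1)).choose (n + 2) := rfl
  omega

/-- Touchard's identity for Catalan numbers:
`C_{n+1} = Σ_{0 ≤ k ≤ n/2} C_k · 2^{n-2k} · binomial(n, 2k)`. -/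
theorem touchard_identity (n : ℕ) :
    catalan (n + 1) =
      ∑ k ∈ Finset.range (n / 2 + 1), catalan k * 2 ^ (n - 2 * k) * n.choose (2 * k) := by
  have step : ∀ k ∈ Finset.range (n / 2 + 1),
      catalan k * 2 ^ (n - 2 * k) * n.choose (2 * k)
        = (2 * k).choose (k + 0) * 2 ^ (n - 2 * k) * n.choose (2 * k)
          - (2 * k).choose (k + 1) * 2 ^ (n - 2 * k) * n.choose (2 * k) := by
    intro k _
    rw [catalan_sub k, Nat.sub_mul, Nat.sub_mul]; norm_num
  rw [Finset.sum_congr rfl step, Finset.sum_tsub_distrib _ ?h, ← touchard_key n 0,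
    ← touchard_key n 1]
  · simpa using catalan_succ_sub n
  case h =>
    intro k _
    have := Nat.choose_le_middle (k + 1) (2 * k)
    rw [show 2 * k / 2 = k from by omega] at this
    rw [Nat.add_zero]
    exact Nat.mul_le_mul_right _ (Nat.mul_le_mul_right _ this)
end

section
/- For every k ≥ 1, Σ over pairs (λ, r) with λ ≥ 1, r ≥ 0 and λ·2^r = k of 4^r·r·(-1)^{λ-1}·λ equals 2k·(2^{v₂(k)} - 1), where v₂(k) is the 2-adic valuation of k. -/
open Finset

lemma geo_sum_aux (n : ℕ) : ∑ r ∈ range n, (r : ℤ) * 2 ^ r = ((n : ℤ) - 2) * 2 ^ n + 2 := by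
  induction n with
  | zero => simp
  | succ n ih => rw [sum_range_succ, ih]; push_cast; ring

/-- For `k ≥ 1`, `Σ_{λ·2^r = k} 4^r·r·(-1)^{λ-1}·λ = 2k·(2^{v₂(k)} - 1)`,
where `v₂` is the 2-adic valuation. -/
theorem sum_signed_factorizations (k : ℕ) (hk : 1 ≤ k) :
    ∑ p ∈ (Finset.range (k + 1) ×ˢ Finset.range (k + 1)).filter
        (fun p => p.1 * 2 ^ p.2 = k),
        ((4 : ℤ) ^ p.2 * p.2 * (-1) ^ (p.1 - 1) * p.1)
      = 2 * (k : ℤ) * (2 ^ padicValNat 2 k - 1) := by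
  have hk0 : k ≠ 0 := by omega
  set v := padicValNat 2 k with hv
  have hvf : k.factorization 2 = v := Nat.factorization_def k Nat.prime_two
  set m := k / 2 ^ v with hm
  have hkm : 2 ^ v * m = k := by
    rw [hm, ← hvf]; exact Nat.ordProj_mul_ordCompl_eq_self k 2
  have hmodd : Odd m := by
    have h2 := Nat.not_dvd_ordCompl Nat.prime_two hk0
    rw [hvf] at h2
    exact Nat.odd_iff.mpr (by omega)
  have hm1 : 1 ≤ m := hmodd.pos
  have hdvdv : 2 ^ v ∣ k := ⟨m, hkm.symm⟩
  have hdiv : ∀ r, r ≤ v → k / 2 ^ r = 2 ^ (v - r) * m := by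
    intro r hr
    have hkr : k = 2 ^ r * (2 ^ (v - r) * m) := by
      rw [← mul_assoc, ← pow_add, Nat.add_sub_cancel' hr, hkm]
    rw [hkr, Nat.mul_div_cancel_left _ (pow_pos two_pos r)]
  have hset : ((Finset.range (k + 1) ×ˢ Finset.range (k + 1)).filter
      (fun p => p.1 * 2 ^ p.2 = k))
      = (range (v + 1)).image (fun r => (k / 2 ^ r, r)) := by
    ext ⟨a, r⟩
    simp only [mem_filter, mem_product, mem_range, mem_image, Prod.mk.injEq]
    constructor
    · rintro ⟨⟨_, _⟩, h⟩
      have h2 : 2 ^ r ∣ k := ⟨a, by rw [← h]; ring⟩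
      have hrv : r ≤ v := by
        have := (Nat.Prime.pow_dvd_iff_le_factorization Nat.prime_two hk0).mp h2
        omega
      exact ⟨r, by omega, by rw [← h, Nat.mul_div_cancel _ (pow_pos two_pos r)], rfl⟩
    · rintro ⟨r, hr, rfl, rfl⟩
      have hrv : r ≤ v := by omega
      have hdvd : 2 ^ r ∣ k := dvd_trans (pow_dvd_pow 2 hrv) hdvdv
      have h2k : 2 ^ r ≤ k := Nat.le_of_dvd (by omega) hdvd
      have hrk : r ≤ k := le_trans (Nat.lt_two_pow_self (n := r)).le h2k
      exact ⟨⟨by have := Nat.div_le_self k (2 ^ r); omega, by omega⟩,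
        Nat.div_mul_cancel hdvd⟩
  rw [hset, Finset.sum_image (by intro x _ y _ h; exact (Prod.ext_iff.mp h).2)]
  dsimp only
  have hsum1 : ∀ r ∈ range v,
      ((4 : ℤ) ^ r * r * (-1) ^ (k / 2 ^ r - 1) * ((k / 2 ^ r : ℕ) : ℤ))
      = -((m : ℤ) * 2 ^ v * ((r : ℤ) * 2 ^ r)) := by
    intro r hr
    rw [mem_range] at hr
    have h1 : k / 2 ^ r = 2 ^ (v - r) * m := hdiv r hr.le
    have hodd : Odd (2 ^ (v - r) * m - 1) := by
      obtain ⟨t, ht⟩ : ∃ t, v - r = t + 1 := ⟨v - r - 1, by omega⟩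
      have hs : 1 ≤ 2 ^ t * m := Nat.one_le_iff_ne_zero.mpr (by positivity)
      refine ⟨2 ^ t * m - 1, ?_⟩
      have : 2 ^ (v - r) * m = 2 * (2 ^ t * m) := by rw [ht, pow_succ]; ring
      omega
    rw [h1, hodd.neg_one_pow]
    have hv' : (2 : ℤ) ^ v = 2 ^ (v - r) * 2 ^ r := by
      rw [← pow_add]; congr 1; omega
    have h4 : (4 : ℤ) ^ r = 2 ^ r * 2 ^ r := by rw [← mul_pow]; norm_num
    push_cast
    rw [hv', h4]; ring
  rw [sum_range_succ, Finset.sum_congr rfl hsum1, hdiv v le_rfl, Nat.sub_self,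
    pow_zero, one_mul, (Nat.Odd.sub_odd hmodd odd_one).neg_one_pow]
  have hkZ : (k : ℤ) = 2 ^ v * m := by exact_mod_cast hkm.symm
  have h4v : (4 : ℤ) ^ v = 2 ^ v * 2 ^ v := by rw [← mul_pow]; norm_num
  rw [Finset.sum_neg_distrib, ← Finset.mul_sum, geo_sum_aux, hkZ, h4v]
  ring
end

section
/- Define L_r(z) recursively by L₀(z) = 4z and L_r(z) = 4·L_{r-1}(z²/(1-2z)²) + 4z for r ≥ 1. Then under the substitution z = u/(1+u)², one has L_r(z) = Σ_{j=0}^{r} 4^{j+1} · u^{2^j}/(1 + u^{2^j})². -/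
open Complex Finset

/-- `L₀(z) = 4z`, `L_r(z) = 4·L_{r-1}(z²/(1-2z)²) + 4z`. -/
noncomputable def Lred : ℕ → ℂ → ℂ
  | 0, z => 4 * z
  | r + 1, z => 4 * Lred r (z ^ 2 / (1 - 2 * z) ^ 2) + 4 * z

lemma key_sub (u : ℂ) (hu : ‖u‖ < 1) :
    (u / (1 + u) ^ 2) ^ 2 / (1 - 2 * (u / (1 + u) ^ 2)) ^ 2
      = u ^ 2 / (1 + u ^ 2) ^ 2 := by
  have h1 : (1 : ℂ) + u ≠ 0 := by
    intro h
    have : u = -1 := by linear_combination h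
    simp [this] at hu
  have h2 : (1 : ℂ) + u ^ 2 ≠ 0 := by
    intro h
    have : ‖u ^ 2‖ = 1 := by
      have : u ^ 2 = -1 := by linear_combination h
      simp [this]
    rw [norm_pow] at this
    nlinarith [norm_nonneg u]
  have e1 : 1 - 2 * (u / (1 + u) ^ 2) = (1 + u ^ 2) / (1 + u) ^ 2 := by
    field_simp
    ring
  rw [e1, div_pow, div_pow, div_div_div_comm, div_self (pow_ne_zero _ (pow_ne_zero _ h1)),
    div_one]

/-- Under the substitution `z = u/(1+u)²`:
`L_r(z) = Σ_{j=0}^{r} 4^{j+1}·u^{2^j}/(1+u^{2^j})²`. -/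
theorem Lred_explicit (r : ℕ) (u : ℂ) (hu : ‖u‖ < 1) :
    Lred r (u / (1 + u) ^ 2)
      = ∑ j ∈ Finset.range (r + 1),
          4 ^ (j + 1) * (u ^ 2 ^ j / (1 + u ^ 2 ^ j) ^ 2) := by
  induction r generalizing u with
  | zero => simp [Lred]
  | succ r ih =>
    have hu2 : ‖u ^ 2‖ < 1 := by
      rw [norm_pow]
      nlinarith [norm_nonneg u]
    rw [Lred, key_sub u hu, ih (u ^ 2) hu2,
      Finset.sum_range_succ' (fun j => (4:ℂ) ^ (j + 1) * (u ^ 2 ^ j / (1 + u ^ 2 ^ j) ^ 2)) (r + 1)]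
    congr 1
    · rw [Finset.mul_sum]
      apply Finset.sum_congr rfl
      intro j _
      have h : (u ^ 2) ^ 2 ^ j = u ^ 2 ^ (j + 1) := by
        rw [← pow_mul, ← pow_succ']
      rw [h]
      ring
    · norm_num
end
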